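/- arXiv:1507.00711 — 2 statements merged into one kernel-verified Lean document; each statement's English description precedes it below -/
import Mathlib

section
/- For every entire holomorphic function f on ℂ, there exists an entire holomorphic function g on ℂ such that f(z) = g(z+1) - g(z) for all z ∈ ℂ. -/
open Complex Metric MeasureTheory intervalIntegral Set
open scoped Real Topology Nat

noncomputable section

namespace Guichard

/-- Radius of the contour used for degree `k`. -/
def ρ (k : ℕ) : ℝ := (2 * k + 1) * Real.pi

lemma ρ_pos (k : ℕ) : 0 < ρ k := by
  have := Real.pi_pos
  have : (0:ℝ) < 2 * k + 1 := by positivity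
  unfold ρ; positivity

lemma one_le_ρ (k : ℕ) : 1 ≤ ρ k := by
  have hk : (0:ℝ) ≤ (k:ℝ) := Nat.cast_nonneg k
  have h1 : (1:ℝ) ≤ 2 * k + 1 := by linarith
  have := Real.pi_gt_three
  calc (1:ℝ) = 1 * 1 := by ring
  _ ≤ (2 * k + 1) * Real.pi := by
      apply mul_le_mul h1 (by linarith) (by norm_num) (by positivity)

lemma nat_le_ρ (k : ℕ) : (k : ℝ) ≤ ρ k := by
  have := Real.pi_gt_three
  have h : (k : ℝ) ≥ 0 := Nat.cast_nonneg k
  unfold ρ; nlinarith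

/-- The key lower bound for the kernel denominator on the contour. -/
lemma kernel_lb {k : ℕ} {w : ℂ} (hw : ‖w‖ = ρ k) :
    (1/2 : ℝ) ≤ ‖Complex.exp w - 1‖ := by
  rcases le_or_gt (Real.log 2) w.re with hre | hre
  · -- right part : |e^w| ≥ 2
    have h2 : (2:ℝ) ≤ Real.exp w.re := by
      calc (2:ℝ) = Real.exp (Real.log 2) := (Real.exp_log (by norm_num)).symm
      _ ≤ Real.exp w.re := Real.exp_le_exp.mpr hre
    have h3 := norm_sub_norm_le (Complex.exp w) 1
    simp only [Complex.norm_exp, norm_one] at h3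
    linarith
  rcases le_or_gt w.re (- Real.log 2) with hre' | hre'
  · -- left part : |e^w| ≤ 1/2
    have h2 : Real.exp w.re ≤ 1/2 := by
      calc Real.exp w.re ≤ Real.exp (- Real.log 2) := Real.exp_le_exp.mpr hre'
      _ = 1/2 := by rw [Real.exp_neg, Real.exp_log] <;> norm_num
    have h3 := norm_sub_norm_le (1:ℂ) (Complex.exp w)
    simp only [Complex.norm_exp, norm_one] at h3
    rw [norm_sub_rev]
    linarith
  · -- middle strip : cos (im w) ≤ 0
    have hlog : Real.log 2 < 1 := by
      have := Real.log_two_lt_d9; linarith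
    have hre2 : w.re ^ 2 ≤ 1 := by
      have h1 : |w.re| ≤ Real.log 2 := abs_le.mpr ⟨by linarith, by linarith⟩
      have : |w.re| ≤ 1 := by linarith
      nlinarith [abs_nonneg w.re, _root_.sq_abs w.re]
    have habs : w.re ^ 2 + w.im ^ 2 = ρ k ^ 2 := by
      have h4 := Complex.sq_norm w
      rw [hw, Complex.normSq_apply] at h4
      rw [pow_two, pow_two]; linarith
    have him : ρ k - 1 ≤ |w.im| := by
      have h1 : (ρ k - 1)^2 ≤ w.im ^ 2 := by
        have := one_le_ρ k
        nlinarith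
      nlinarith [abs_nonneg w.im, _root_.sq_abs w.im, one_le_ρ k]
    have him2 : |w.im| ≤ ρ k := by
      nlinarith [abs_nonneg w.im, _root_.sq_abs w.im, sq_nonneg w.re, ρ_pos k]
    -- cos w.im ≤ 0
    have hcos : Real.cos w.im ≤ 0 := by
      rw [← Real.cos_abs]
      set t : ℝ := ρ k - |w.im| with ht
      have ht0 : 0 ≤ t := by linarith
      have ht1 : t ≤ 1 := by linarith
      have : |w.im| = (Real.pi - t) + (k : ℤ) * (2 * Real.pi) := by
        simp only [ht]; unfold ρ; push_cast; ring
      rw [this, Real.cos_add_int_mul_two_pi, Real.cos_pi_sub]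
      have : 0 ≤ Real.cos t := Real.cos_nonneg_of_mem_Icc
        ⟨by linarith [Real.pi_gt_three], by linarith [Real.pi_gt_three]⟩
      linarith
    -- |e^w - 1|^2 = e^{2x} - 2 e^x cos y + 1 ≥ 1
    have hsq : ‖Complex.exp w - 1‖ ^ 2 =
        Real.exp w.re ^ 2 - 2 * Real.exp w.re * Real.cos w.im + 1 := by
      rw [Complex.sq_norm, Complex.normSq_apply]
      simp [Complex.exp_re, Complex.exp_im]
      nlinarith [Real.sin_sq_add_cos_sq w.im]
    nlinarith [Real.exp_pos w.re, norm_nonneg (Complex.exp w - 1),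
      sq_nonneg (Real.exp w.re)]

end Guichard

namespace Guichard2
open Guichard

lemma exp_tsum (ζ : ℂ) : Complex.exp ζ = ∑' n : ℕ, (n ! : ℂ)⁻¹ * ζ ^ n := by
  rw [Complex.exp_eq_exp_ℂ, NormedSpace.exp_eq_tsum ℂ]
  simp [smul_eq_mul]

lemma hasSum_circleIntegral_exp {R : ℝ} (hR : 0 < R) (ψ : ℂ → ℂ)
    (hc : ContinuousOn ψ (sphere (0:ℂ) R)) (z : ℂ) :
    HasSum (fun n : ℕ => (z ^ n / n !) • ∮ w in C(0, R), ψ w * w ^ n)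
      (∮ w in C(0, R), ψ w * Complex.exp (w * z)) := by
  obtain ⟨B, hB⟩ := (isCompact_sphere (0:ℂ) R).exists_bound_of_continuousOn hc
  have hB0 : 0 ≤ B := le_trans (norm_nonneg _) (hB (circleMap 0 R 0) (circleMap_mem_sphere 0 hR.le 0))
  set γ : ℝ → ℂ := circleMap 0 R with hγ
  have hmem : ∀ θ : ℝ, γ θ ∈ sphere (0:ℂ) R := fun θ => circleMap_mem_sphere 0 hR.le θ
  have hγabs : ∀ θ, ‖γ θ‖ = R := fun θ => by
    simpa using mem_sphere_zero_iff_norm.mp (hmem θ)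
  set F : ℕ → ℝ → ℂ := fun n θ => (z ^ n / n !) • (deriv γ θ • (ψ (γ θ) * (γ θ) ^ n)) with hF
  have hψγ : Continuous fun θ => ψ (γ θ) :=
    hc.comp_continuous (continuous_circleMap 0 R) hmem
  have hdγ : Continuous (deriv γ) := by
    have : deriv γ = fun θ => circleMap 0 R θ * Complex.I := by
      funext θ; exact deriv_circleMap 0 R θ
    rw [this]; exact (continuous_circleMap 0 R).mul continuous_const
  have hFc : ∀ n, Continuous (F n) := by
    intro n
    simp only [hF]
    refine Continuous.smul (f := fun _ : ℝ => z ^ n / (n ! : ℂ)) continuous_const ?_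
    exact hdγ.smul (hψγ.mul ((continuous_circleMap 0 R).pow n))
  have hFb : ∀ n θ, ‖F n θ‖ ≤ ‖z‖ ^ n / n ! * (R * (B * R ^ n)) := by
    intro n θ
    have h1 : ‖deriv γ θ‖ = R := by
      rw [deriv_circleMap, norm_mul, Complex.norm_I, mul_one]
      exact hγabs θ
    simp only [hF, norm_smul, smul_eq_mul, norm_mul, h1]
    rw [norm_div]
    gcongr
    · exact le_of_eq (by simp)
    · simp
    · exact hB _ (hmem θ)
    · rw [norm_pow]; rw [hγabs θ]
  -- integrability
  have hFi : ∀ n, Integrable (F n) (volume.restrict (Ioc 0 (2*Real.pi))) :=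
    fun n => (hFc n).integrableOn_Ioc
  -- summable integrals of norms
  have hFs : Summable fun n => ∫ θ in Ioc 0 (2*Real.pi), ‖F n θ‖ := by
    have hg : Summable (fun n : ℕ =>
        (‖z‖ ^ n / n ! * (R * (B * R ^ n))) * (2 * Real.pi)) := by
      have h := (Real.summable_pow_div_factorial (R * ‖z‖)).mul_left
        (R * B * (2 * Real.pi))
      exact h.congr (fun n => by rw [mul_pow]; ring)
    refine Summable.of_nonneg_of_le
      (fun n => MeasureTheory.integral_nonneg (fun θ => norm_nonneg _)) (fun n => ?_) hg
    have hle : ∫ θ in Ioc 0 (2*Real.pi), ‖F n θ‖ ≤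
        ∫ _θ in Ioc 0 (2*Real.pi), (‖z‖ ^ n / n ! * (R * (B * R ^ n))) := by
      apply integral_mono_of_nonneg
      · exact Filter.Eventually.of_forall (fun θ => norm_nonneg _)
      · exact integrableOn_const measure_Ioc_lt_top.ne
      · exact Filter.Eventually.of_forall (fun θ => hFb n θ)
    refine hle.trans ?_
    rw [setIntegral_const, Real.volume_real_Ioc_of_le (by positivity), smul_eq_mul]
    exact le_of_eq (by ring)
  have key := hasSum_integral_of_summable_integral_norm hFi hFs
  -- identify the sum of the integrand
  have hptw : ∀ θ : ℝ, (∑' n, F n θ) = deriv γ θ • (ψ (γ θ) * Complex.exp (γ θ * z)) := by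
    intro θ
    have : ∀ n : ℕ, F n θ = (deriv γ θ * ψ (γ θ)) * ((n ! : ℂ)⁻¹ * (γ θ * z) ^ n) := by
      intro n; simp only [hF, smul_eq_mul, mul_pow]; ring
    rw [tsum_congr this, tsum_mul_left, ← exp_tsum (γ θ * z), smul_eq_mul]
    try ring
  -- identify each integral
  have hint : ∀ n : ℕ, (∫ θ in Ioc 0 (2*Real.pi), F n θ) =
      (z ^ n / n !) • ∮ w in C(0, R), ψ w * w ^ n := by
    intro n
    rw [circleIntegral, intervalIntegral.integral_of_le (by positivity),
      ← MeasureTheory.integral_smul]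
    try rfl
  have hint2 : (∫ θ in Ioc 0 (2*Real.pi), ∑' n, F n θ) =
      ∮ w in C(0, R), ψ w * Complex.exp (w * z) := by
    rw [circleIntegral, intervalIntegral.integral_of_le (by positivity)]
    exact integral_congr_ae (Filter.Eventually.of_forall (fun θ => hptw θ))
  rw [hint2] at key
  have : (fun n => ∫ θ in Ioc 0 (2*Real.pi), F n θ)
      = fun n => (z ^ n / n !) • ∮ w in C(0, R), ψ w * w ^ n := funext hint
  rwa [this] at key

end Guichard2

namespace Guichard3
open Guichard Guichard2

/-- kernel -/
def Φ (k : ℕ) (w : ℂ) : ℂ := w ^ (-(k:ℤ) - 1) / (Complex.exp w - 1)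

/-- the fundamental solutions: `q k (z+1) - q k z = z^k/k!` -/
def q (k : ℕ) (z : ℂ) : ℂ :=
  (2 * (Real.pi:ℂ) * Complex.I)⁻¹ • ∮ w in C(0, ρ k), Φ k w * Complex.exp (w * z)

lemma sphere_abs {k : ℕ} {w : ℂ} (hw : w ∈ sphere (0:ℂ) (ρ k)) : ‖w‖ = ρ k := by
  simpa using mem_sphere_zero_iff_norm.mp hw

lemma sphere_ne_zero {k : ℕ} {w : ℂ} (hw : w ∈ sphere (0:ℂ) (ρ k)) : w ≠ 0 := by
  intro h
  have := sphere_abs hw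
  rw [h] at this
  simp only [norm_zero] at this
  exact (ρ_pos k).ne this

lemma sphere_exp_ne_one {k : ℕ} {w : ℂ} (hw : w ∈ sphere (0:ℂ) (ρ k)) :
    Complex.exp w - 1 ≠ 0 := by
  have := kernel_lb (sphere_abs hw)
  intro h
  rw [h] at this
  simp only [norm_zero] at this
  linarith

lemma Φ_contOn (k : ℕ) : ContinuousOn (Φ k) (sphere (0:ℂ) (ρ k)) := by
  intro w hw
  apply ContinuousAt.continuousWithinAt
  exact (continuousAt_zpow₀ _ _ (Or.inl (sphere_ne_zero hw))).div
    (Complex.continuous_exp.continuousAt.sub continuousAt_const) (sphere_exp_ne_one hw)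

/-- bound constant for the kernel -/
def D (k : ℕ) : ℝ := 2 * (ρ k) ^ (-(k:ℤ) - 1)

lemma D_pos (k : ℕ) : 0 < D k := by
  have := ρ_pos k
  unfold D
  positivity

lemma Φ_bound {k : ℕ} {w : ℂ} (hw : w ∈ sphere (0:ℂ) (ρ k)) : ‖Φ k w‖ ≤ D k := by
  have h1 : ‖(w : ℂ) ^ (-(k:ℤ) - 1)‖ = (ρ k) ^ (-(k:ℤ) - 1) := by
    rw [norm_zpow, sphere_abs hw]
  have h2 := kernel_lb (sphere_abs hw)
  rw [Φ, norm_div, h1]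
  rw [div_le_iff₀ (by linarith)]
  unfold D
  have h3 : (0:ℝ) < (ρ k) ^ (-(k:ℤ) - 1) := by have := ρ_pos k; positivity
  nlinarith

lemma two_pi_I_ne : (2 * (Real.pi:ℂ) * Complex.I) ≠ 0 := by
  simp [Real.pi_ne_zero, Complex.I_ne_zero]

lemma norm_two_pi_I_inv : ‖(2 * (Real.pi:ℂ) * Complex.I)⁻¹‖ = (2 * Real.pi)⁻¹ := by
  rw [norm_inv]
  congr 1
  simp [abs_of_pos Real.pi_pos]

/-- monomial kernel -/
def ψk (k : ℕ) (w : ℂ) : ℂ := w ^ (-(k:ℤ) - 1)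

lemma ψk_contOn (k : ℕ) : ContinuousOn (ψk k) (sphere (0:ℂ) (ρ k)) := by
  intro w hw
  exact (continuousAt_zpow₀ _ _ (Or.inl (sphere_ne_zero hw))).continuousWithinAt

/-- The difference equation for `q k`. -/
lemma q_diff (k : ℕ) (z : ℂ) : q k (z + 1) - q k z = z ^ k / k ! := by
  have hInt : ∀ ζ : ℂ, CircleIntegrable (fun w => Φ k w * Complex.exp (w * ζ)) 0 (ρ k) := by
    intro ζ
    apply ContinuousOn.circleIntegrable (ρ_pos k).le
    exact (Φ_contOn k).mul (Complex.continuous_exp.comp (continuous_id.mul continuous_const)).continuousOn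
  have hsub : q k (z+1) - q k z = (2 * (Real.pi:ℂ) * Complex.I)⁻¹ •
      ∮ w in C(0, ρ k), (Φ k w * Complex.exp (w * (z+1)) - Φ k w * Complex.exp (w * z)) := by
    rw [circleIntegral.integral_sub (hInt (z+1)) (hInt z), q, q, smul_sub]
  -- simplify the integrand on the sphere
  have hcongr : (∮ w in C(0, ρ k), (Φ k w * Complex.exp (w * (z+1)) - Φ k w * Complex.exp (w * z)))
      = ∮ w in C(0, ρ k), ψk k w * Complex.exp (w * z) := by
    apply circleIntegral.integral_congr (ρ_pos k).le
    intro w hw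
    have hden := sphere_exp_ne_one hw
    simp only [Φ, ψk]
    have : w * (z + 1) = w * z + w := by ring
    rw [this, Complex.exp_add]
    field_simp
  -- the monomial integrals
  have hJ : ∀ n : ℕ, (∮ w in C(0, ρ k), ψk k w * w ^ n)
      = if n = k then (2 * (Real.pi:ℂ) * Complex.I) else 0 := by
    intro n
    have hcg : (∮ w in C(0, ρ k), ψk k w * w ^ n)
        = ∮ w in C(0, ρ k), (w - 0) ^ ((n:ℤ) - (k:ℤ) - 1) := by
      apply circleIntegral.integral_congr (ρ_pos k).le
      intro w hw
      have hw0 := sphere_ne_zero hw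
      simp only [sub_zero, ψk]
      rw [← zpow_natCast w n, ← zpow_add₀ hw0]
      congr 1
      ring
    rw [hcg]
    by_cases hnk : n = k
    · subst hnk
      have h1 : (n:ℤ) - (n:ℤ) - 1 = -1 := by ring
      rw [h1, if_pos rfl]
      have hcg2 : (∮ w in C(0, ρ n), (w - (0:ℂ)) ^ (-1 : ℤ)) = ∮ w in C(0, ρ n), (w - 0)⁻¹ :=
        circleIntegral.integral_congr (ρ_pos n).le (fun w _ => by rw [zpow_neg_one])
      rw [hcg2]
      exact circleIntegral.integral_sub_inv_of_mem_ball (mem_ball_self (ρ_pos n))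
    · rw [circleIntegral.integral_sub_zpow_of_ne (by omega) 0 0 (ρ k), if_neg hnk]
  have hs := hasSum_circleIntegral_exp (ρ_pos k) (ψk k) (ψk_contOn k) z
  have heq : (fun n : ℕ => (z ^ n / n !) • ∮ w in C(0, ρ k), ψk k w * w ^ n)
      = fun n => if n = k then (z ^ k / k !) • (2 * (Real.pi:ℂ) * Complex.I) else 0 := by
    funext n
    rw [hJ n]
    by_cases h : n = k
    · subst h; simp
    · simp [h]
  rw [heq] at hs
  have hval : (∮ w in C(0, ρ k), ψk k w * Complex.exp (w * z))
      = (z ^ k / k !) • (2 * (Real.pi:ℂ) * Complex.I) :=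
    hs.unique (hasSum_ite_eq k _)
  rw [hsub, hcongr, hval, smul_smul, smul_eq_mul]
  rw [mul_comm ((2 * (Real.pi:ℂ) * Complex.I)⁻¹ * (z ^ k / (k ! : ℂ)))
    (2 * (Real.pi:ℂ) * Complex.I), ← mul_assoc, mul_inv_cancel₀ two_pi_I_ne, one_mul]

end Guichard3

namespace Guichard3
open Guichard Guichard2

/-- Taylor coefficients of `q k` -/
def c (k n : ℕ) : ℂ :=
  ((2 * (Real.pi:ℂ) * Complex.I)⁻¹ * ∮ w in C(0, ρ k), Φ k w * w ^ n) / n !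

lemma hasSum_q (k : ℕ) (z : ℂ) : HasSum (fun n => c k n * z ^ n) (q k z) := by
  have hs := (hasSum_circleIntegral_exp (ρ_pos k) (Φ k) (Φ_contOn k) z).const_smul
    ((2 * (Real.pi:ℂ) * Complex.I)⁻¹)
  have heq : (fun n : ℕ => (2 * (Real.pi:ℂ) * Complex.I)⁻¹ •
      ((z ^ n / n !) • ∮ w in C(0, ρ k), Φ k w * w ^ n)) = fun n => c k n * z ^ n := by
    funext n
    simp only [smul_eq_mul, c]
    ring
  rw [heq] at hs
  exact hs

lemma q_coeff_bound (k n : ℕ) : ‖c k n‖ ≤ ρ k * D k * (ρ k) ^ n / n ! := by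
  have hstep : ‖∮ w in C(0, ρ k), Φ k w * w ^ n‖ ≤ 2 * Real.pi * ρ k * (D k * (ρ k) ^ n) := by
    have h := circleIntegral.norm_integral_le_of_norm_le_const (c := (0:ℂ))
      (R := ρ k) (C := D k * (ρ k) ^ n) (ρ_pos k).le (f := fun w => Φ k w * w ^ n) ?_
    · exact h
    · intro w hw
      rw [norm_mul, norm_pow, sphere_abs hw]
      exact mul_le_mul_of_nonneg_right (Φ_bound hw) (by have := ρ_pos k; positivity)
  have h2 : ‖c k n‖ = (2 * Real.pi)⁻¹ * ‖∮ w in C(0, ρ k), Φ k w * w ^ n‖ / n ! := by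
    rw [c, norm_div, norm_mul, norm_two_pi_I_inv]
    simp [Nat.cast_nonneg]
  rw [h2]
  have hpi : (0:ℝ) < 2 * Real.pi := by positivity
  have hfac : (0:ℝ) < (n ! : ℝ) := by positivity
  rw [div_le_div_iff₀ hfac hfac]
  have := mul_le_mul_of_nonneg_left hstep (le_of_lt (inv_pos.mpr hpi))
  calc (2 * Real.pi)⁻¹ * ‖∮ w in C(0, ρ k), Φ k w * w ^ n‖ * (n ! : ℝ)
      ≤ (2 * Real.pi)⁻¹ * (2 * Real.pi * ρ k * (D k * (ρ k) ^ n)) * (n ! : ℝ) := by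
        apply mul_le_mul_of_nonneg_right _ hfac.le
        exact this
  _ = ρ k * D k * (ρ k) ^ n * (n ! : ℝ) := by field_simp

lemma q_bound (k : ℕ) (z : ℂ) : ‖q k z‖ ≤ ρ k * D k * Real.exp (ρ k * ‖z‖) := by
  have hstep : ‖∮ w in C(0, ρ k), Φ k w * Complex.exp (w * z)‖ ≤
      2 * Real.pi * ρ k * (D k * Real.exp (ρ k * ‖z‖)) := by
    have h := circleIntegral.norm_integral_le_of_norm_le_const (c := (0:ℂ))
      (R := ρ k) (C := D k * Real.exp (ρ k * ‖z‖)) (ρ_pos k).le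
      (f := fun w => Φ k w * Complex.exp (w * z)) ?_
    · exact h
    · intro w hw
      rw [norm_mul]
      have he : ‖Complex.exp (w * z)‖ ≤ Real.exp (ρ k * ‖z‖) := by
        rw [Complex.norm_exp]
        apply Real.exp_le_exp.mpr
        calc (w * z).re ≤ ‖w * z‖ := Complex.re_le_norm _
        _ = ρ k * ‖z‖ := by rw [norm_mul, sphere_abs hw]
      exact mul_le_mul (Φ_bound hw) he (norm_nonneg _) (D_pos k).le
  rw [q, norm_smul, norm_two_pi_I_inv]
  have hpi : (0:ℝ) < 2 * Real.pi := by positivity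
  calc (2 * Real.pi)⁻¹ * ‖∮ w in C(0, ρ k), Φ k w * Complex.exp (w * z)‖
      ≤ (2 * Real.pi)⁻¹ * (2 * Real.pi * ρ k * (D k * Real.exp (ρ k * ‖z‖))) := by
        exact mul_le_mul_of_nonneg_left hstep (inv_pos.mpr hpi).le
  _ = ρ k * D k * Real.exp (ρ k * ‖z‖) := by field_simp

/-- workhorse : a series of entire functions with locally summable bounds is entire -/
lemma entire_tsum {F : ℕ → ℂ → ℂ} (hd : ∀ n, Differentiable ℂ (F n))
    (hb : ∀ r : ℝ, 0 < r → ∃ u : ℕ → ℝ, Summable u ∧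
      ∀ (n : ℕ) (z : ℂ), z ∈ ball (0:ℂ) r → ‖F n z‖ ≤ u n) :
    Differentiable ℂ (fun z => ∑' n, F n z) := by
  intro z
  have hz : z ∈ ball (0:ℂ) (‖z‖ + 1) := by
    rw [mem_ball_zero_iff]; linarith [norm_nonneg z]
  obtain ⟨u, hu, hub⟩ := hb (‖z‖ + 1) (by positivity)
  have hD := differentiableOn_tsum_of_summable_norm hu
    (fun n => (hd n).differentiableOn) isOpen_ball (fun n w hw => hub n w hw)
  exact (hD z hz).differentiableAt (isOpen_ball.mem_nhds hz)

lemma q_differentiable (k : ℕ) : Differentiable ℂ (q k) := by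
  have hq : q k = fun z => ∑' n, c k n * z ^ n := by
    funext z; exact (hasSum_q k z).tsum_eq.symm
  rw [hq]
  apply entire_tsum
  · intro n; exact (differentiable_const _).mul (differentiable_pow n)
  · intro r hr
    refine ⟨fun n => ρ k * D k * (ρ k) ^ n / n ! * r ^ n, ?_, ?_⟩
    · have h := (Real.summable_pow_div_factorial (ρ k * r)).mul_left (ρ k * D k)
      exact h.congr fun n => by rw [mul_pow]; ring
    · intro n w hw
      have hwn : ‖w‖ ≤ r := le_of_lt (mem_ball_zero_iff.mp hw)
      calc ‖c k n * w ^ n‖ = ‖c k n‖ * ‖w‖ ^ n := by rw [norm_mul, norm_pow]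
      _ ≤ (ρ k * D k * (ρ k) ^ n / n !) * r ^ n := by
          apply mul_le_mul (q_coeff_bound k n) (pow_le_pow_left₀ (norm_nonneg w) hwn n)
            (by positivity) ?_
          have := ρ_pos k; have := D_pos k
          positivity

end Guichard3

namespace Guichard4
open Guichard Guichard2 Guichard3

theorem main (f : ℂ → ℂ) (hf : Differentiable ℂ f) :
    ∃ g : ℂ → ℂ, Differentiable ℂ g ∧ ∀ z : ℂ, f z = g (z + 1) - g z := by
  set d : ℕ → ℂ := fun k => iteratedDeriv k f 0 with hd
  -- master bound for the series ∑ d k * q k z on balls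
  have master : ∀ r : ℝ, 0 < r → ∃ u : ℕ → ℝ, Summable u ∧
      ∀ (k : ℕ) (z : ℂ), z ∈ ball (0:ℂ) r → ‖d k * q k z‖ ≤ u k := by
    intro r hr
    set R : ℝ := 2 * Real.exp (2 * Real.pi * r) with hR
    have hRpos : (0:ℝ) < R := by positivity
    -- Taylor coefficients grow at most like C k! / R^k
    have hts := (Complex.hasSum_taylorSeries_of_entire hf 0 (R:ℂ)).summable
    have htend : Filter.Tendsto
        (fun n : ℕ => ‖((n !:ℂ))⁻¹ • ((R:ℂ) - 0) ^ n • d n‖) Filter.atTop (nhds 0) := by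
      have := hts.tendsto_atTop_zero.norm
      simpa using this
    obtain ⟨C, hC⟩ := htend.bddAbove_range
    have hC' : ∀ n : ℕ, ((n !:ℝ))⁻¹ * (R ^ n * ‖d n‖) ≤ C := by
      intro n
      have h1 : C ∈ upperBounds _ := hC
      have h2 := h1 (Set.mem_range_self (f := fun n : ℕ => ‖((n !:ℂ))⁻¹ • ((R:ℂ) - 0) ^ n • d n‖) n)
      rw [norm_smul, norm_smul, norm_inv, norm_pow, sub_zero] at h2
      simpa [Complex.norm_real, abs_of_pos hRpos, mul_assoc] using h2
    have hC0 : 0 ≤ C := le_trans (by positivity) (hC' 0)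
    have hdk : ∀ k : ℕ, ‖d k‖ ≤ C * k ! / R ^ k := by
      intro k
      have h := hC' k
      have hfp : (0:ℝ) < (k ! : ℝ) := by positivity
      have hRp : (0:ℝ) < R ^ k := by positivity
      rw [le_div_iff₀ hRp]
      calc ‖d k‖ * R ^ k = ((k !:ℝ)) * (((k !:ℝ))⁻¹ * (R ^ k * ‖d k‖)) := by
            field_simp
      _ ≤ ((k !:ℝ)) * C := by exact mul_le_mul_of_nonneg_left h hfp.le
      _ = C * k ! := by ring
    -- the dominating sequence
    refine ⟨fun k => C * (k ! : ℝ) / R ^ k * (2 / ρ k ^ k) *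
      (Real.exp (Real.pi * r) * Real.exp (2 * Real.pi * r) ^ k), ?_, ?_⟩
    · -- summable
      have hgeo : Summable (fun k : ℕ => (2 * C * Real.exp (Real.pi * r)) * (1/2 : ℝ) ^ k) :=
        (summable_geometric_of_lt_one (by norm_num) (by norm_num)).mul_left _
      apply Summable.of_nonneg_of_le _ _ hgeo
      · intro k
        have := ρ_pos k
        positivity
      · intro k
        have hρ : (0:ℝ) < ρ k ^ k := pow_pos (ρ_pos k) k
        have h6 : (k ! : ℝ) ≤ ρ k ^ k := by
          calc (k ! : ℝ) ≤ (k:ℝ) ^ k := by exact_mod_cast Nat.factorial_le_pow k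
          _ ≤ ρ k ^ k := pow_le_pow_left₀ (Nat.cast_nonneg k) (nat_le_ρ k) k
        have heq : C * (k ! : ℝ) / R ^ k * (2 / ρ k ^ k) *
            (Real.exp (Real.pi * r) * Real.exp (2 * Real.pi * r) ^ k)
            = (2 * C * Real.exp (Real.pi * r)) * ((k ! : ℝ) / ρ k ^ k) *
              (Real.exp (2 * Real.pi * r) / R) ^ k := by
          rw [div_pow]
          field_simp
        have h7 : Real.exp (2 * Real.pi * r) / R = 1/2 := by
          rw [hR]; field_simp
        rw [heq, h7]
        have h8 : (k ! : ℝ) / ρ k ^ k ≤ 1 := by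
          rw [div_le_one hρ]; exact h6
        have h9 : (0:ℝ) ≤ (1/2:ℝ) ^ k := by positivity
        calc (2 * C * Real.exp (Real.pi * r)) * ((k ! : ℝ) / ρ k ^ k) * (1/2:ℝ) ^ k
            ≤ (2 * C * Real.exp (Real.pi * r)) * 1 * (1/2:ℝ) ^ k := by
              apply mul_le_mul_of_nonneg_right _ h9
              apply mul_le_mul_of_nonneg_left h8 (by positivity)
        _ = (2 * C * Real.exp (Real.pi * r)) * (1/2:ℝ) ^ k := by ring
    · -- the pointwise bound
      intro k z hz
      have hzr : ‖z‖ < r := mem_ball_zero_iff.mp hz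
      have h4 : ρ k * D k = 2 / ρ k ^ k := by
        rw [D, show (-(k:ℤ) - 1) = -((k:ℕ):ℤ) + (-1 : ℤ) by ring,
          zpow_add₀ (ρ_pos k).ne', zpow_neg, zpow_natCast, zpow_neg_one]
        field_simp
        rw [div_eq_div_iff (by have := ρ_pos k; positivity) (by have := ρ_pos k; positivity)]
        ring
      have h5 : Real.exp (ρ k * r) =
          Real.exp (Real.pi * r) * Real.exp (2 * Real.pi * r) ^ k := by
        rw [← Real.exp_nat_mul, ← Real.exp_add]
        congr 1
        simp only [Guichard.ρ]
        push_cast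
        ring
      calc ‖d k * q k z‖ = ‖d k‖ * ‖q k z‖ := norm_mul _ _
      _ ≤ (C * k ! / R ^ k) * (ρ k * D k * Real.exp (ρ k * ‖z‖)) := by
          apply mul_le_mul (hdk k) (q_bound k z) (norm_nonneg _)
          positivity
      _ ≤ (C * k ! / R ^ k) * (2 / ρ k ^ k * Real.exp (ρ k * r)) := by
          rw [h4]
          apply mul_le_mul_of_nonneg_left _ (by positivity)
          apply mul_le_mul_of_nonneg_left _ (by have := ρ_pos k; positivity)
          exact Real.exp_le_exp.mpr (mul_le_mul_of_nonneg_left hzr.le (ρ_pos k).le)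
      _ = C * ↑k ! / R ^ k * (2 / ρ k ^ k) *
            (Real.exp (Real.pi * r) * Real.exp (2 * Real.pi * r) ^ k) := by
          rw [← h5]; ring
  -- the solution
  refine ⟨fun z => ∑' k, d k * q k z, ?_, ?_⟩
  · exact entire_tsum (fun k => (differentiable_const _).mul (q_differentiable k)) master
  · intro z
    obtain ⟨u, hu, hb⟩ := master (‖z‖ + 2) (by positivity)
    have hmem1 : z + 1 ∈ ball (0:ℂ) (‖z‖ + 2) := by
      rw [mem_ball_zero_iff]
      calc ‖z + 1‖ ≤ ‖z‖ + ‖(1:ℂ)‖ := norm_add_le _ _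
      _ < ‖z‖ + 2 := by norm_num
    have hmem2 : z ∈ ball (0:ℂ) (‖z‖ + 2) := by
      rw [mem_ball_zero_iff]; linarith [norm_nonneg z]
    have hs1 : Summable (fun k => d k * q k (z + 1)) :=
      Summable.of_norm_bounded hu (fun k => hb k _ hmem1)
    have hs2 : Summable (fun k => d k * q k z) :=
      Summable.of_norm_bounded hu (fun k => hb k _ hmem2)
    calc f z = ∑' k : ℕ, d k * (z ^ k / k !) := by
          rw [← (Complex.hasSum_taylorSeries_of_entire hf 0 z).tsum_eq]
          apply tsum_congr
          intro n
          rw [sub_zero, smul_eq_mul, smul_eq_mul]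
          ring
    _ = ∑' k : ℕ, (d k * q k (z + 1) - d k * q k z) := by
          apply tsum_congr
          intro k
          rw [← q_diff k z]
          ring
    _ = (∑' k, d k * q k (z + 1)) - ∑' k, d k * q k z := Summable.tsum_sub hs1 hs2

end Guichard4

end

/-- For every entire holomorphic function `f` on `ℂ`, there exists an entire
holomorphic function `g` with `f z = g (z+1) - g z` for all `z`. -/
theorem difference_equation_entire (f : ℂ → ℂ) (hf : Differentiable ℂ f) :
    ∃ g : ℂ → ℂ, Differentiable ℂ g ∧ ∀ z : ℂ, f z = g (z + 1) - g z :=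
  Guichard4.main f hf
end

section
/- The set Γ_{2,4} of classes in PSL(2,ℤ) of matrices (α β; γ δ) with α ≡ 1 mod 4, β ≡ 0 mod 4, γ ≡ 0 mod 2, δ ≡ 1 mod 2 forms a subgroup of index 2 in Γ₂ (the level-2 congruence subgroup of PSL(2,ℤ)). -/
/-- `SL(2,ℤ)`. -/
abbrev SL2Z := Matrix.SpecialLinearGroup (Fin 2) ℤ

/-- `PSL(2,ℤ) = SL(2,ℤ)/{±1}`, realized as the quotient by the center. -/
abbrev PSL2Z := SL2Z ⧸ Subgroup.center SL2Z

/-- The condition that an integral matrix is congruent to the identity mod 2. -/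
def IsGamma2Rep (A : SL2Z) : Prop :=
  (A : Matrix (Fin 2) (Fin 2) ℤ) 0 0 % 2 = 1 ∧
  (A : Matrix (Fin 2) (Fin 2) ℤ) 1 1 % 2 = 1 ∧
  (A : Matrix (Fin 2) (Fin 2) ℤ) 0 1 % 2 = 0 ∧
  (A : Matrix (Fin 2) (Fin 2) ℤ) 1 0 % 2 = 0

/-- The condition `α ≡ 1 mod 4, β ≡ 0 mod 4, γ ≡ 0 mod 2, δ ≡ 1 mod 2`. -/
def IsGamma24Rep (A : SL2Z) : Prop :=
  (A : Matrix (Fin 2) (Fin 2) ℤ) 0 0 % 4 = 1 ∧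
  (A : Matrix (Fin 2) (Fin 2) ℤ) 0 1 % 4 = 0 ∧
  (A : Matrix (Fin 2) (Fin 2) ℤ) 1 0 % 2 = 0 ∧
  (A : Matrix (Fin 2) (Fin 2) ℤ) 1 1 % 2 = 1

open Matrix Subgroup Matrix.SpecialLinearGroup

lemma SL2Z.mul_entry (A B : SL2Z) (i j : Fin 2) :
    ((A * B : SL2Z) : Matrix (Fin 2) (Fin 2) ℤ) i j =
      (A : Matrix (Fin 2) (Fin 2) ℤ) i 0 * (B : Matrix (Fin 2) (Fin 2) ℤ) 0 j +
      (A : Matrix (Fin 2) (Fin 2) ℤ) i 1 * (B : Matrix (Fin 2) (Fin 2) ℤ) 1 j := by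
  simp [Matrix.SpecialLinearGroup.coe_mul, Matrix.mul_apply, Fin.sum_univ_two]

lemma SL2Z.inv_entry (A : SL2Z) :
    ((A⁻¹ : SL2Z) : Matrix (Fin 2) (Fin 2) ℤ) 0 0 = (A : Matrix (Fin 2) (Fin 2) ℤ) 1 1 ∧
    ((A⁻¹ : SL2Z) : Matrix (Fin 2) (Fin 2) ℤ) 0 1 = -(A : Matrix (Fin 2) (Fin 2) ℤ) 0 1 ∧
    ((A⁻¹ : SL2Z) : Matrix (Fin 2) (Fin 2) ℤ) 1 0 = -(A : Matrix (Fin 2) (Fin 2) ℤ) 1 0 ∧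
    ((A⁻¹ : SL2Z) : Matrix (Fin 2) (Fin 2) ℤ) 1 1 = (A : Matrix (Fin 2) (Fin 2) ℤ) 0 0 := by
  rw [SL2_inv_expl A]
  refine ⟨?_, ?_, ?_, ?_⟩ <;> simp


lemma emod_oo {x y : ℤ} (hx : x % 2 = 1) (hy : y % 2 = 1) : x * y % 2 = 1 := by
  rw [Int.mul_emod, hx, hy]; norm_num

lemma emod_el {x : ℤ} (y : ℤ) (hx : x % 2 = 0) : x * y % 2 = 0 := by
  rw [Int.mul_emod, hx, zero_mul, Int.zero_emod]

lemma emod_er (x : ℤ) {y : ℤ} (hy : y % 2 = 0) : x * y % 2 = 0 := by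
  rw [Int.mul_emod, hy, mul_zero, Int.zero_emod]

lemma emod4_el {x : ℤ} (y : ℤ) (hx : x % 4 = 0) : x * y % 4 = 0 := by
  rw [Int.mul_emod, hx, zero_mul, Int.zero_emod]

lemma emod4_er (x : ℤ) {y : ℤ} (hy : y % 4 = 0) : x * y % 4 = 0 := by
  rw [Int.mul_emod, hy, mul_zero, Int.zero_emod]

/-- Γ₂ as a subgroup of SL(2,ℤ). -/
def G2 : Subgroup SL2Z where
  carrier := {A | IsGamma2Rep A}
  one_mem' := by
    simp [IsGamma2Rep, Matrix.SpecialLinearGroup.coe_one, Matrix.one_apply]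
  mul_mem' := by
    rintro A B ⟨ha, hd, hb, hc⟩ ⟨ha', hd', hb', hc'⟩
    refine ⟨?_, ?_, ?_, ?_⟩ <;> rw [SL2Z.mul_entry, Int.add_emod]
    · rw [emod_oo ha ha', emod_er _ hc']; norm_num
    · rw [emod_el _ hc, emod_oo hd hd']; norm_num
    · rw [emod_er _ hb', emod_el _ hb]; norm_num
    · rw [emod_el _ hc, emod_er _ hc']; norm_num
  inv_mem' := by
    rintro A ⟨ha, hd, hb, hc⟩
    obtain ⟨h1, h2, h3, h4⟩ := SL2Z.inv_entry A
    exact ⟨by rw [h1]; omega, by rw [h4]; omega, by rw [h2]; omega, by rw [h3]; omega⟩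

/-- Γ_{2,4} together with -Γ_{2,4}, as a subgroup of SL(2,ℤ): Γ₂-matrices with β ≡ 0 mod 4. -/
def G24' : Subgroup SL2Z where
  carrier := {A | (A : Matrix (Fin 2) (Fin 2) ℤ) 0 0 % 2 = 1 ∧
    (A : Matrix (Fin 2) (Fin 2) ℤ) 1 1 % 2 = 1 ∧
    (A : Matrix (Fin 2) (Fin 2) ℤ) 0 1 % 4 = 0 ∧
    (A : Matrix (Fin 2) (Fin 2) ℤ) 1 0 % 2 = 0}
  one_mem' := by
    simp [Matrix.SpecialLinearGroup.coe_one, Matrix.one_apply]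
  mul_mem' := by
    rintro A B ⟨ha, hd, hb, hc⟩ ⟨ha', hd', hb', hc'⟩
    have hb2 : (A : Matrix (Fin 2) (Fin 2) ℤ) 0 1 % 2 = 0 := by omega
    have hb2' : (B : Matrix (Fin 2) (Fin 2) ℤ) 0 1 % 2 = 0 := by omega
    refine ⟨?_, ?_, ?_, ?_⟩ <;> rw [SL2Z.mul_entry, Int.add_emod]
    · rw [emod_oo ha ha', emod_er _ hc']; norm_num
    · rw [emod_el _ hc, emod_oo hd hd']; norm_num
    · rw [emod4_er _ hb', emod4_el _ hb]; norm_num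
    · rw [emod_el _ hc, emod_er _ hc']; norm_num
  inv_mem' := by
    rintro A ⟨ha, hd, hb, hc⟩
    obtain ⟨h1, h2, h3, h4⟩ := SL2Z.inv_entry A
    exact ⟨by rw [h1]; omega, by rw [h4]; omega, by rw [h2]; omega, by rw [h3]; omega⟩

lemma G24'_le_G2 : G24' ≤ G2 := by
  rintro A ⟨ha, hd, hb, hc⟩
  exact ⟨ha, hd, by omega, hc⟩

lemma center_le_G24' : Subgroup.center SL2Z ≤ G24' := by
  intro A hA
  obtain ⟨r, hr, hrA⟩ := Matrix.SpecialLinearGroup.mem_center_iff.mp hA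
  have hr2 : r % 2 = 1 := by
    rcases Int.isUnit_iff.mp (IsUnit.of_mul_eq_one (a := r) r (by rw [← sq]; simpa using hr)) with h | h <;>
      simp [h]
  have h00 : (A : Matrix (Fin 2) (Fin 2) ℤ) 0 0 = r := by
    rw [← hrA, Matrix.scalar_apply, Matrix.diagonal_apply_eq]
  have h11 : (A : Matrix (Fin 2) (Fin 2) ℤ) 1 1 = r := by
    rw [← hrA, Matrix.scalar_apply, Matrix.diagonal_apply_eq]
  have h01 : (A : Matrix (Fin 2) (Fin 2) ℤ) 0 1 = 0 := by
    rw [← hrA, Matrix.scalar_apply, Matrix.diagonal_apply_ne]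
    decide
  have h10 : (A : Matrix (Fin 2) (Fin 2) ℤ) 1 0 = 0 := by
    rw [← hrA, Matrix.scalar_apply, Matrix.diagonal_apply_ne]
    decide
  exact ⟨by rw [h00]; exact hr2, by rw [h11]; exact hr2, by rw [h01]; norm_num, by rw [h10]; norm_num⟩

lemma neg_one_mem_center : (-1 : SL2Z) ∈ Subgroup.center SL2Z := by
  rw [Subgroup.mem_center_iff]
  intro g
  simp

/-- The quotient map SL(2,ℤ) → PSL(2,ℤ). -/
abbrev mkP : SL2Z →* PSL2Z := QuotientGroup.mk' (Subgroup.center SL2Z)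

lemma mkP_neg (A : SL2Z) : mkP (-A) = mkP A := by
  have : (-A : SL2Z) = (-1) * A := by rw [neg_one_mul]
  rw [this, MonoidHom.map_mul]
  have h1 : mkP (-1) = 1 := (QuotientGroup.eq_one_iff _).mpr neg_one_mem_center
  rw [h1, one_mul]

/-- The parity homomorphism on Γ₂. -/
def parityHom : G2 →* Multiplicative (ZMod 2) :=
  MonoidHom.mk' (fun A => Multiplicative.ofAdd
    ((((A : SL2Z) : Matrix (Fin 2) (Fin 2) ℤ) 0 1 / 2 : ℤ) : ZMod 2)) (by
    rintro ⟨A, ha, hd, hb, hc⟩ ⟨B, ha', hd', hb', hc'⟩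
    show Multiplicative.ofAdd
        ((((A * B : SL2Z) : Matrix (Fin 2) (Fin 2) ℤ) 0 1 / 2 : ℤ) : ZMod 2) = _
    simp only [← ofAdd_add]
    congr 1
    rw [SL2Z.mul_entry]
    set a := (A : Matrix (Fin 2) (Fin 2) ℤ) 0 0
    set b := (A : Matrix (Fin 2) (Fin 2) ℤ) 0 1
    set b' := (B : Matrix (Fin 2) (Fin 2) ℤ) 0 1
    set d' := (B : Matrix (Fin 2) (Fin 2) ℤ) 1 1
    obtain ⟨u, hu⟩ : ∃ u, b = 2 * u := ⟨b / 2, by omega⟩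
    obtain ⟨v, hv⟩ : ∃ v, b' = 2 * v := ⟨b' / 2, by omega⟩
    obtain ⟨s, hs⟩ : ∃ s, a = 2 * s + 1 := ⟨a / 2, by omega⟩
    obtain ⟨t, ht⟩ : ∃ t, d' = 2 * t + 1 := ⟨d' / 2, by omega⟩
    have key : a * b' + b * d' = 2 * (u + v + 2 * (s * v + u * t)) := by
      rw [hu, hv, hs, ht]; ring
    rw [key, hu, hv, Int.mul_ediv_cancel_left _ two_ne_zero,
      Int.mul_ediv_cancel_left _ two_ne_zero, Int.mul_ediv_cancel_left _ two_ne_zero]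
    push_cast
    have h2 : (2 : ZMod 2) = 0 := rfl
    rw [h2]
    ring)

lemma parityHom_ker : parityHom.ker = G24'.subgroupOf G2 := by
  ext ⟨A, ha, hd, hb, hc⟩
  simp only [MonoidHom.mem_ker, parityHom, MonoidHom.mk'_apply,
    Subgroup.mem_subgroupOf]
  rw [show (1 : Multiplicative (ZMod 2)) = Multiplicative.ofAdd 0 from rfl,
    Equiv.apply_eq_iff_eq, ZMod.intCast_zmod_eq_zero_iff_dvd]
  constructor
  · rintro h
    obtain ⟨k, hk⟩ := h
    exact ⟨ha, hd, by omega, hc⟩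
  · rintro ⟨-, -, hb4, -⟩
    exact ⟨(A : Matrix (Fin 2) (Fin 2) ℤ) 0 1 / 4, by omega⟩

/-- The matrix (1 2; 0 1) as an element of SL(2,ℤ). -/
def T2 : SL2Z := ⟨!![1, 2; 0, 1], by simp [Matrix.det_fin_two_of]⟩

lemma T2_mem_G2 : T2 ∈ G2 := by
  refine ⟨?_, ?_, ?_, ?_⟩ <;> simp [T2]

lemma parityHom_surjective : Function.Surjective parityHom := by
  intro y
  have hy : y = 1 ∨ y = Multiplicative.ofAdd 1 := by
    revert y; decide
  rcases hy with rfl | rfl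
  · exact ⟨1, map_one _⟩
  · refine ⟨⟨T2, T2_mem_G2⟩, ?_⟩
    simp only [parityHom, MonoidHom.mk'_apply]
    norm_num [T2]

lemma relindex_G24'_G2 : G24'.relIndex G2 = 2 := by
  have h : (G24'.subgroupOf G2).index = parityHom.ker.index := by rw [parityHom_ker]
  rw [Subgroup.relIndex, h, Subgroup.index_ker,
    MonoidHom.range_eq_top.mpr parityHom_surjective]
  rw [Nat.card_congr Subgroup.topEquiv.toEquiv, Nat.card_eq_fintype_card]
  rfl

/-- The classes in `PSL(2,ℤ)` of matrices with `α ≡ 1 (4), β ≡ 0 (4),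
γ ≡ 0 (2), δ ≡ 1 (2)` form a subgroup `Γ_{2,4}` of index `2` in the level-2
congruence subgroup `Γ₂` of `PSL(2,ℤ)`. -/
theorem gamma_two_four_subgroup_index_two :
    ∃ H24 H2 : Subgroup PSL2Z,
      (H24 : Set PSL2Z) =
        {x | ∃ A : SL2Z, (QuotientGroup.mk A : PSL2Z) = x ∧ IsGamma24Rep A} ∧
      (H2 : Set PSL2Z) =
        {x | ∃ A : SL2Z, (QuotientGroup.mk A : PSL2Z) = x ∧ IsGamma2Rep A} ∧
      H24 ≤ H2 ∧
      H24.relIndex H2 = 2 := by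
  refine ⟨G24'.map mkP, G2.map mkP, ?_, ?_, ?_, ?_⟩
  · ext x
    simp only [Subgroup.coe_map, Set.mem_image, SetLike.mem_coe, Set.mem_setOf_eq]
    constructor
    · rintro ⟨A, ⟨ha, hd, hb, hc⟩, rfl⟩
      rcases show (A : Matrix (Fin 2) (Fin 2) ℤ) 0 0 % 4 = 1 ∨
          (A : Matrix (Fin 2) (Fin 2) ℤ) 0 0 % 4 = 3 from by omega with h | h
      · exact ⟨A, rfl, h, hb, hc, hd⟩
      · refine ⟨-A, ?_, ?_, ?_, ?_, ?_⟩
        · exact mkP_neg A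
        all_goals
          simp only [Matrix.SpecialLinearGroup.coe_neg, Matrix.neg_apply]
          omega
    · rintro ⟨A, rfl, ha, hb, hc, hd⟩
      exact ⟨A, ⟨by omega, hd, hb, hc⟩, rfl⟩
  · ext x
    simp only [Subgroup.coe_map, Set.mem_image, SetLike.mem_coe, Set.mem_setOf_eq]
    constructor
    · rintro ⟨A, ⟨ha, hd, hb, hc⟩, rfl⟩
      exact ⟨A, rfl, ha, hd, hb, hc⟩
    · rintro ⟨A, rfl, ha, hd, hb, hc⟩
      exact ⟨A, ⟨ha, hd, hb, hc⟩, rfl⟩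
  · exact Subgroup.map_mono G24'_le_G2
  · have h1 : Subgroup.comap mkP (G24'.map mkP) = G24' := by
      rw [Subgroup.comap_map_eq, QuotientGroup.ker_mk', sup_eq_left.mpr center_le_G24']
    calc (G24'.map mkP).relIndex (G2.map mkP)
        = (Subgroup.comap mkP (G24'.map mkP)).relIndex G2 := by
          rw [Subgroup.relIndex_comap]
      _ = G24'.relIndex G2 := by rw [h1]
      _ = 2 := relindex_G24'_G2
end
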